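/- The ℓ-fold *-product of g_n with itself is the scalar (−1)^{n(ℓ−1)} times the identity of G; equivalently, ∏_{k=1}^{ℓ−1} α(g_n^k, g_n) = (−1)^{n(ℓ−1)}. -/

import Mathlib

/-!
Common setup for the twisted graded Hecke algebra associated to the homocyclic
group `G ≅ (ℤ/ℓℤ)^{n-1}` (Gan–Highfield, "Center of twisted graded Hecke
algebras for homocyclic groups").

All indices are 0-based: the paper's `x_i, g_i, t_i, τ_i` (for `i = 1, …, n`)
correspond to index `i - 1 : Fin n` here; subscripts are taken mod `n` via the
(wrap-around) addition of `Fin n`.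
-/

noncomputable section

namespace TGHA

/-- `ζ` raised to an exponent in `ZMod ℓ` (representative taken in `{0, …, ℓ-1}`). -/
def zp (ℓ : ℕ) (ζ : ℂ) (z : ZMod ℓ) : ℂ := ζ ^ z.val

/-- Given the vector `a` of diagonal exponents of a group element
`g = diag(ζ^{a 0}, …, ζ^{a (n-1)})`, `pS n ℓ a k` is the exponent `i_k` of `g_k` when
`g` is written as `g₁^{i₁} ⋯ g_{n-1}^{i_{n-1}}`, namely the partial sum `a 0 + ⋯ + a (k-1)`. -/
def pS (n ℓ : ℕ) [NeZero n] (a : Fin n → ZMod ℓ) (k : ℕ) : ZMod ℓ :=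
  ∑ m ∈ Finset.range k, a (Fin.ofNat n m)

/-- The 2-cocycle `α : G × G → ℂˣ`,
`α(g₁^{i₁}⋯g_{n-1}^{i_{n-1}}, g₁^{j₁}⋯g_{n-1}^{j_{n-1}}) = ζ^{-i₁j₂ - i₂j₃ - ⋯ - i_{n-2}j_{n-1}}`,
expressed in terms of the vectors of diagonal exponents of the two group elements. -/
def coc (n ℓ : ℕ) [NeZero n] (ζ : ℂ) (a b : Fin n → ZMod ℓ) : ℂ :=
  zp ℓ ζ (-∑ k ∈ Finset.Icc 1 (n - 2), pS n ℓ a k * pS n ℓ b (k + 1))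

/-- The homocyclic group `G`: diagonal matrices `g = diag(ζ^{a 0}, …, ζ^{a (n-1)})` in
`SL_n(ℂ)` with `g^ℓ = 1`, identified with their vectors `a` of exponents; the condition
`det g = 1` is `∑ i, a i = 0`. Written additively. -/
def Gsub (n ℓ : ℕ) : AddSubgroup (Fin n → ZMod ℓ) where
  carrier := {a | ∑ i, a i = 0}
  zero_mem' := by simp
  add_mem' := by
    intro a b ha hb
    simp only [Set.mem_setOf_eq] at *
    simp [Finset.sum_add_distrib, ha, hb]
  neg_mem' := by
    intro a ha
    simp only [Set.mem_setOf_eq] at *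
    simp [ha]

abbrev G (n ℓ : ℕ) := ↥(Gsub n ℓ)

/-- The vector of diagonal exponents of the generator `g_i`
(`g_i x_i = ζ x_i`, `g_i x_{i+1} = ζ⁻¹ x_{i+1}`, `g_i x_j = x_j` otherwise). -/
def gvec (n ℓ : ℕ) [NeZero n] (i : Fin n) : Fin n → ZMod ℓ :=
  Pi.single i 1 - Pi.single (i + 1) 1

lemma gvec_mem (n ℓ : ℕ) [NeZero n] (i : Fin n) : gvec n ℓ i ∈ Gsub n ℓ := by
  show ∑ j, gvec n ℓ i j = 0
  simp [gvec, Finset.sum_sub_distrib]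

/-- The generator `g_i` as an element of `G`. -/
def gelt (n ℓ : ℕ) [NeZero n] (i : Fin n) : G n ℓ := ⟨gvec n ℓ i, gvec_mem n ℓ i⟩

/-- The defining relations of the twisted graded Hecke algebra `H`, as a quotient of the
free algebra on generators `x_i` (`Sum.inl i`) and `u_g`, `g ∈ G` (`Sum.inr g`): the
relations `u_g u_h = α(g,h) u_{gh}`, `u_1 = 1`, `u_g x_i = ζ^{a_i} x_i u_g` present the
crossed product `TV #_α G`, and the last two relations are the Hecke relations
`x_i x_{i+1} - x_{i+1} x_i = t_i g_i` and `x_i x_j = x_j x_i` for `|i - j| ∉ {1, n-1}`. -/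
inductive Rel (n ℓ : ℕ) [NeZero n] (ζ : ℂ) (t : Fin n → ℂ) :
    FreeAlgebra ℂ (Fin n ⊕ G n ℓ) → FreeAlgebra ℂ (Fin n ⊕ G n ℓ) → Prop
  | grp (g h : G n ℓ) :
      Rel n ℓ ζ t (FreeAlgebra.ι ℂ (Sum.inr g) * FreeAlgebra.ι ℂ (Sum.inr h))
        (coc n ℓ ζ g.1 h.1 • FreeAlgebra.ι ℂ (Sum.inr (g + h)))
  | one : Rel n ℓ ζ t (FreeAlgebra.ι ℂ (Sum.inr (0 : G n ℓ))) 1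
  | gx (g : G n ℓ) (i : Fin n) :
      Rel n ℓ ζ t (FreeAlgebra.ι ℂ (Sum.inr g) * FreeAlgebra.ι ℂ (Sum.inl i))
        (zp ℓ ζ (g.1 i) • (FreeAlgebra.ι ℂ (Sum.inl i) * FreeAlgebra.ι ℂ (Sum.inr g)))
  | hecke (i : Fin n) :
      Rel n ℓ ζ t
        (FreeAlgebra.ι ℂ (Sum.inl i) * FreeAlgebra.ι ℂ (Sum.inl (i + 1)) -
          FreeAlgebra.ι ℂ (Sum.inl (i + 1)) * FreeAlgebra.ι ℂ (Sum.inl i))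
        (t i • FreeAlgebra.ι ℂ (Sum.inr (gelt n ℓ i)))
  | commx (i j : Fin n) (h₁ : j ≠ i + 1) (h₂ : i ≠ j + 1) :
      Rel n ℓ ζ t (FreeAlgebra.ι ℂ (Sum.inl i) * FreeAlgebra.ι ℂ (Sum.inl j))
        (FreeAlgebra.ι ℂ (Sum.inl j) * FreeAlgebra.ι ℂ (Sum.inl i))

/-- The twisted graded Hecke algebra `H`. -/
abbrev H (n ℓ : ℕ) [NeZero n] (ζ : ℂ) (t : Fin n → ℂ) := RingQuot (Rel n ℓ ζ t)

/-- The image of `x_i` in `H`. -/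
def xx (n ℓ : ℕ) [NeZero n] (ζ : ℂ) (t : Fin n → ℂ) (i : Fin n) : H n ℓ ζ t :=
  RingQuot.mkAlgHom ℂ (Rel n ℓ ζ t) (FreeAlgebra.ι ℂ (Sum.inl i))

/-- The image of `g ∈ G` in `H`. -/
def ug (n ℓ : ℕ) [NeZero n] (ζ : ℂ) (t : Fin n → ℂ) (g : G n ℓ) : H n ℓ ζ t :=
  RingQuot.mkAlgHom ℂ (Rel n ℓ ζ t) (FreeAlgebra.ι ℂ (Sum.inr g))

/-- Index set for the basis `y^p u_g` of the crossed product `ℂ[y₁^±,…,y_n^±] #_α G`. -/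
abbrev M (n ℓ : ℕ) := (Fin n → ℤ) × G n ℓ

/-- `χ(g, p)`: the scalar by which `g = diag(ζ^{a 0}, …)` acts on the Laurent monomial `y^p`;
for `g = g_i` it is `ζ^{p_i - p_{i+1}}`. -/
def chi (n ℓ : ℕ) [NeZero n] (ζ : ℂ) (a : Fin n → ZMod ℓ) (p : Fin n → ℤ) : ℂ :=
  zp ℓ ζ (∑ j, a j * (p j : ZMod ℓ))

/-- Structure constants of the crossed product `ℂ[y₁^±,…,y_n^±] #_α G` with respect to its
basis: `(y^p u_g) (y^q u_h) = α(g,h) χ(g,q) y^{p+q} u_{gh}`. -/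
def sigma (n ℓ : ℕ) [NeZero n] (ζ : ℂ) (a b : M n ℓ) : ℂ :=
  coc n ℓ ζ a.2.1 b.2.1 * chi n ℓ ζ a.2.1 b.1

/-- The basis element `y^p u_g` (`a = (p, g)`) of the crossed product
`ℂ[y₁^±,…,y_n^±] #_α G`, realized faithfully as the operator of left multiplication by it
on the underlying vector space of the crossed product. -/
def Top (n ℓ : ℕ) [NeZero n] (ζ : ℂ) (a : M n ℓ) : Module.End ℂ (M n ℓ →₀ ℂ) :=
  Finsupp.lsum ℂ fun b => sigma n ℓ ζ a b • Finsupp.lsingle (a + b)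

/-- The algebra containing (the left regular realization of) the crossed product
`ℂ[y₁^±,…,y_n^±] #_α G`. -/
abbrev A (n ℓ : ℕ) := Module.End ℂ (M n ℓ →₀ ℂ)

/-- The element `u_g`, `g ∈ G`, of the crossed product. -/
def Uy (n ℓ : ℕ) [NeZero n] (ζ : ℂ) (g : G n ℓ) : A n ℓ := Top n ℓ ζ (0, g)

/-- The element `y_i` of the crossed product. -/
def Ygen (n ℓ : ℕ) [NeZero n] (ζ : ℂ) (i : Fin n) : A n ℓ := Top n ℓ ζ (Pi.single i 1, 0)

/-- The element `y_i⁻¹` of the crossed product. -/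
def Yinv (n ℓ : ℕ) [NeZero n] (ζ : ℂ) (i : Fin n) : A n ℓ := Top n ℓ ζ (-Pi.single i 1, 0)

/-- `τ_i = t_i/(ζ-1)` for `i = 1, …, n-1` and `τ_n = ζ t_n/(ζ - 1)`. -/
def tau (n : ℕ) (ζ : ℂ) (t : Fin n → ℂ) (i : Fin n) : ℂ :=
  if (i : ℕ) = n - 1 then ζ * t i / (ζ - 1) else t i / (ζ - 1)

/-- `τ̃_i = τ_i^ℓ` for `i = 1, …, n-1` and `τ̃_n = (-1)^{n(ℓ-1)} τ_n^ℓ`. -/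
def taut (n ℓ : ℕ) (ζ : ℂ) (t : Fin n → ℂ) (i : Fin n) : ℂ :=
  if (i : ℕ) = n - 1 then (-1) ^ (n * (ℓ - 1)) * tau n ζ t i ^ ℓ else tau n ζ t i ^ ℓ

/-- The index set `J`: subsets `{i₁ < ⋯ < i_k}` of `{1, …, n}` with
`|i_r - i_s| ∉ {1, n-1}`, i.e. containing no pair of (cyclically) adjacent indices. -/
def Jset (n : ℕ) [NeZero n] : Finset (Finset (Fin n)) :=
  Finset.univ.filter fun S => ∀ i ∈ S, ∀ j ∈ S, j ≠ i + 1

/-- The exponent vector `δ - ε_{i₁} - ⋯ - ε_{i_k}` for `S = {i₁, …, i_k} ∈ J`: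
the entry at `j` is `0` if some `ε_i`, `i ∈ S`, covers position `j` (i.e. `j ∈ S` or
`j - 1 ∈ S` cyclically) and `1` otherwise. -/
def expS (n : ℕ) [NeZero n] (S : Finset (Fin n)) (j : Fin n) : ℕ :=
  if j ∈ S ∨ j - 1 ∈ S then 0 else 1

/-- The ordered monomial `x₁^{p₁} ⋯ x_n^{p_n} ∈ H`. -/
def xpow (n ℓ : ℕ) [NeZero n] (ζ : ℂ) (t : Fin n → ℂ) (p : Fin n → ℕ) : H n ℓ ζ t :=
  ((List.finRange n).map fun j => xx n ℓ ζ t j ^ p j).prod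

/-- The product `g_{i₁} * ⋯ * g_{i_k} ∈ H` over `S = {i₁ < ⋯ < i_k}` (in increasing
order); since `u_g u_h = α(g,h) u_{gh}` holds in `H`, this is the `*`-product. -/
def gprodS (n ℓ : ℕ) [NeZero n] (ζ : ℂ) (t : Fin n → ℂ) (S : Finset (Fin n)) :
    H n ℓ ζ t :=
  ((S.sort (· ≤ ·)).map fun i => ug n ℓ ζ t (gelt n ℓ i)).prod

/-- The element `w = Σ_{{i₁<⋯<i_k} ∈ J} τ_{i₁} ⋯ τ_{i_k} x^{δ-ε_{i₁}-⋯-ε_{i_k}}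
g_{i₁} * ⋯ * g_{i_k}` of `H`. -/
def w (n ℓ : ℕ) [NeZero n] (ζ : ℂ) (t : Fin n → ℂ) : H n ℓ ζ t :=
  ∑ S ∈ Jset n, (∏ i ∈ S, tau n ζ t i) • (xpow n ℓ ζ t (expS n S) * gprodS n ℓ ζ t S)

/-- `ν_r = (-1)^r (ℓ/(ℓ-r)) C(ℓ-r, r)`. -/
def nu (ℓ r : ℕ) : ℂ := (-1) ^ r * ((ℓ : ℂ) / ((ℓ : ℂ) - (r : ℂ))) * (Nat.choose (ℓ - r) r : ℂ)

/-- The polynomial `F` in the variables `a_i = X (Sum.inl i)` and `b = X (Sum.inr ())`. -/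
def Fpoly (n ℓ : ℕ) [NeZero n] (ζ : ℂ) (t : Fin n → ℂ) : MvPolynomial (Fin n ⊕ Unit) ℂ :=
  (∑ S ∈ Jset n, (∏ i ∈ S, taut n ℓ ζ t i) •
      ∏ j : Fin n, MvPolynomial.X (Sum.inl j) ^ expS n S j) -
    ∑ r ∈ Finset.range (ℓ / 2 + 1),
      ((-1) ^ (n * r) * ζ ^ ((n - 2) * r) * nu ℓ r * (∏ i : Fin n, tau n ζ t i) ^ r) •
        MvPolynomial.X (Sum.inr ()) ^ (ℓ - 2 * r)

end TGHA

namespace TGHA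

variable (n ℓ : ℕ) [NeZero n]

lemma val_neg_one (hn : 3 ≤ n) : ((-1 : Fin n)).val = n - 1 := by
  obtain ⟨m, rfl⟩ : ∃ m, n = m + 1 := ⟨n - 1, by omega⟩
  simp [Fin.coe_neg_one]

lemma pS_g (hn : 3 ≤ n) (r : ℕ) (hr1 : 1 ≤ r) (hr2 : r ≤ n - 1) :
    pS n ℓ (gvec n ℓ (-1)) r = -1 := by
  have hneg := val_neg_one n hn
  unfold pS
  rw [Finset.sum_eq_single_of_mem 0 (Finset.mem_range.2 hr1)]
  · have h0 : Fin.ofNat n 0 = 0 := by ext; simp [Fin.val_ofNat]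
    rw [h0]
    have h1 : (0 : Fin n) ≠ -1 := by
      intro h; rw [← h] at hneg; simp at hneg; omega
    simp [gvec, Pi.single_apply, h1.symm]
  · intro b hb hb0
    have hval : (Fin.ofNat n b).val = b := by
      rw [Fin.val_ofNat]; exact Nat.mod_eq_of_lt (by have := Finset.mem_range.1 hb; omega)
    have h1 : Fin.ofNat n b ≠ -1 := by
      intro h; rw [h] at hval; have := Finset.mem_range.1 hb; omega
    have h2 : Fin.ofNat n b ≠ 0 := by
      intro h; rw [h] at hval; simp at hval; omega
    simp only [gvec, Pi.sub_apply, Pi.single_apply, neg_add_cancel, h1, h2, if_false, sub_zero]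

end TGHA

namespace TGHA
section zpl
variable {ℓ : ℕ} [NeZero ℓ] {ζ : ℂ} (hζ1 : ζ ^ ℓ = 1)

lemma zp_zero : zp ℓ ζ 0 = 1 := by simp [zp]

include hζ1 in
lemma zp_add (z w : ZMod ℓ) : zp ℓ ζ (z + w) = zp ℓ ζ z * zp ℓ ζ w := by
  unfold zp
  rw [ZMod.val_add, ← pow_eq_pow_mod _ hζ1, pow_add]

include hζ1 in
lemma zp_natCast (x : ℕ) : zp ℓ ζ (x : ZMod ℓ) = ζ ^ x := by
  unfold zp
  rw [ZMod.val_natCast, ← pow_eq_pow_mod _ hζ1]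

include hζ1 in
lemma zp_sum {ι : Type*} (s : Finset ι) (f : ι → ZMod ℓ) :
    zp ℓ ζ (∑ i ∈ s, f i) = ∏ i ∈ s, zp ℓ ζ (f i) := by
  classical
  induction s using Finset.cons_induction with
  | empty => simp [zp_zero]
  | cons a s ha ih => rw [Finset.sum_cons, Finset.prod_cons, zp_add hζ1, ih]

include hζ1 in
lemma zp_neg_natCast (x : ℕ) : zp ℓ ζ (-(x : ZMod ℓ)) = (ζ ^ x)⁻¹ := by
  have h := zp_add hζ1 (-(x : ZMod ℓ)) (x : ZMod ℓ)
  rw [neg_add_cancel, zp_zero, zp_natCast hζ1] at h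
  exact eq_inv_of_mul_eq_one_left h.symm
end zpl
end TGHA

namespace TGHA

lemma pS_smul (n ℓ : ℕ) [NeZero n] (k : ℕ) (a : Fin n → ZMod ℓ) (r : ℕ) :
    pS n ℓ (k • a) r = k • pS n ℓ a r := by
  simp [pS, Finset.smul_sum]

lemma coc_gn (n ℓ : ℕ) [NeZero n] [NeZero ℓ] (hn : 3 ≤ n) (ζ : ℂ) (k : ℕ) :
    coc n ℓ ζ (k • gvec n ℓ (-1)) (gvec n ℓ (-1)) =
      zp ℓ ζ (-(((n - 2) * k : ℕ) : ZMod ℓ)) := by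
  unfold coc
  congr 2
  have key : ∀ r ∈ Finset.Icc 1 (n - 2),
      pS n ℓ (k • gvec n ℓ (-1)) r * pS n ℓ (gvec n ℓ (-1)) (r + 1) = (k : ZMod ℓ) := by
    intro r hr
    obtain ⟨h1, h2⟩ := Finset.mem_Icc.mp hr
    rw [pS_smul, pS_g n ℓ hn r h1 (by omega), pS_g n ℓ hn (r + 1) (by omega) (by omega)]
    push_cast [nsmul_eq_mul]
    ring
  rw [Finset.sum_congr rfl key, Finset.sum_const, Nat.card_Icc]
  push_cast [nsmul_eq_mul]
  ring

end TGHA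


open TGHA in
/-- `∏_{k=1}^{ℓ-1} α(g_n^k, g_n) = (-1)^{n(ℓ-1)}`, i.e. the `ℓ`-fold
`*`-product of `g_n` with itself is the scalar `(-1)^{n(ℓ-1)}` times the identity of `G`
(the paper's `g_n` is `gvec n ℓ (-1)`, the generator with index `n - 1` here). -/
theorem statement13 (n ℓ : ℕ) [NeZero n] (hn : 3 ≤ n) (hℓ : 2 ≤ ℓ)
    (ζ : ℂ) (hζ : IsPrimitiveRoot ζ ℓ) :
    ∏ k ∈ Finset.Icc 1 (ℓ - 1), coc n ℓ ζ (k • gvec n ℓ (-1)) (gvec n ℓ (-1)) =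
      (-1 : ℂ) ^ (n * (ℓ - 1)) := by
  haveI : NeZero ℓ := ⟨by omega⟩
  have hζ1 : ζ ^ ℓ = 1 := hζ.pow_eq_one
  have step1 : ∀ k ∈ Finset.Icc 1 (ℓ - 1),
      coc n ℓ ζ (k • gvec n ℓ (-1)) (gvec n ℓ (-1)) = (ζ ^ ((n - 2) * k))⁻¹ := by
    intro k _
    rw [coc_gn n ℓ hn ζ k, zp_neg_natCast hζ1]
  rw [Finset.prod_congr rfl step1, Finset.prod_inv_distrib,
    Finset.prod_pow_eq_pow_sum, ← Finset.mul_sum]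
  set S : ℕ := ∑ k ∈ Finset.Icc 1 (ℓ - 1), k with hS
  have hS2 : 2 * S = ℓ * (ℓ - 1) := by
    have h1 : ∑ k ∈ Finset.range ℓ, k = S := by
      rw [hS, Finset.range_eq_Ico, Finset.sum_eq_sum_Ico_succ_bot (by omega : 0 < ℓ)]
      rw [← Finset.Ico_add_one_right_eq_Icc, show ℓ - 1 + 1 = ℓ by omega]
      simp
    have := Finset.sum_range_id_mul_two ℓ
    omega
  have main : ζ ^ ((n - 2) * S) = (-1 : ℂ) ^ (n * (ℓ - 1)) := by
    rcases Nat.even_or_odd ℓ with he | ho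
    · -- ℓ even
      obtain ⟨m, hm⟩ := he
      have hm' : ℓ = 2 * m := by omega
      have hSm : S = m * (ℓ - 1) := by
        have h2 : 2 * S = 2 * (m * (ℓ - 1)) := by rw [hS2, hm']; ring
        exact Nat.eq_of_mul_eq_mul_left (by norm_num) h2
      have hζm : ζ ^ m = -1 := by
        have hsq : (ζ ^ m) * (ζ ^ m) = 1 := by
          rw [← pow_add, show m + m = ℓ by omega, hζ1]
        rcases mul_self_eq_one_iff.mp hsq with h | h
        · exact absurd h (hζ.pow_ne_one_of_pos_of_lt (by omega) (by omega))
        · exact h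
      have : ζ ^ ((n - 2) * S) = (-1 : ℂ) ^ ((n - 2) * (ℓ - 1)) := by
        rw [hSm, show (n - 2) * (m * (ℓ - 1)) = m * ((n - 2) * (ℓ - 1)) by ring,
          pow_mul, hζm]
      rw [this, show n * (ℓ - 1) = (n - 2) * (ℓ - 1) + 2 * (ℓ - 1) by
        have : n * (ℓ - 1) = (n - 2) * (ℓ - 1) + 2 * (ℓ - 1) := by
          rw [← Nat.add_mul]; congr 1; omega
        exact this]
      rw [pow_add, pow_mul]
      norm_num
    · -- ℓ odd
      have hev : Even (ℓ - 1) := Nat.Odd.sub_odd ho odd_one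
      obtain ⟨m, hm0⟩ := hev
      have hm : ℓ - 1 = 2 * m := by omega
      have hSm : S = ℓ * m := by
        have h2 : 2 * S = 2 * (ℓ * m) := by rw [hS2, hm]; ring
        exact Nat.eq_of_mul_eq_mul_left (by norm_num) h2
      rw [hSm, show (n - 2) * (ℓ * m) = ℓ * ((n - 2) * m) by ring, pow_mul, hζ1,
        one_pow, hm, show n * (2 * m) = 2 * (n * m) by ring, pow_mul]
      norm_num
  rw [main]
  rcases Nat.even_or_odd (n * (ℓ - 1)) with h | h
  · simp [h.neg_one_pow]
  · simp [h.neg_one_pow]
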